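/- Let P : ℂ² → ℂ² be a polynomial map with J(P) identically equal to 1. Then for each point (a,b) ∈ ℂ², the fiber P⁻¹(a,b) = {(x,y) ∈ ℂ² : P(x,y) = (a,b)} is a finite set. -/

import Mathlib

open MvPolynomial

section Aux

open Polynomial nonZeroDivisors

/-- Relatively prime polynomials over a GCD domain become coprime over the fraction field. -/
theorem auxA_isCoprime_map {R K : Type*} [CommRing R] [IsDomain R] [NormalizedGCDMonoid R]
    [Field K] [Algebra R K] [IsFractionRing R K]
    {p q : R[X]} (hp : p ≠ 0) (h : IsRelPrime p q) :
    IsCoprime (p.map (algebraMap R K)) (q.map (algebraMap R K)) := by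
  apply IsRelPrime.isCoprime
  intro d hdp hdq
  have hmapinj : Function.Injective (Polynomial.map (algebraMap R K)) :=
    Polynomial.map_injective _ (IsFractionRing.injective R K)
  have hpm : p.map (algebraMap R K) ≠ 0 := by
    intro h0
    exact hp (hmapinj (by simpa using h0))
  have hd0 : d ≠ 0 := by
    rintro rfl
    exact hpm (zero_dvd_iff.mp hdp)
  set N := IsLocalization.integerNormalization R⁰ d with hN
  have hN0 : N ≠ 0 := fun h0 => hd0 (IsFractionRing.integerNormalization_eq_zero_iff.mp h0)
  obtain ⟨s, hs⟩ := IsLocalization.integerNormalization_map_to_map R⁰ d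
  have hsne : algebraMap R K (s : R) ≠ 0 := by
    have := nonZeroDivisors.coe_ne_zero s
    exact fun h0 => this ((injective_iff_map_eq_zero _).mp (IsFractionRing.injective R K) _ h0)
  have hcne : algebraMap R K N.content ≠ 0 := by
    intro h0
    exact hN0 (content_eq_zero_iff.mp
      ((injective_iff_map_eq_zero _).mp (IsFractionRing.injective R K) _ h0))
  set q0 := N.primPart with hq0
  have h1 : Polynomial.C (algebraMap R K N.content) * q0.map (algebraMap R K)
      = Polynomial.C (algebraMap R K (s : R)) * d := by
    rw [← Polynomial.map_C, ← Polynomial.map_mul, ← N.eq_C_content_mul_primPart, hs,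
      Algebra.smul_def, Polynomial.algebraMap_apply]
  have hq0d : q0.map (algebraMap R K) ∣ d := by
    have h2 : q0.map (algebraMap R K) ∣ Polynomial.C (algebraMap R K (s : R)) * d :=
      ⟨Polynomial.C (algebraMap R K N.content), by rw [← h1]; ring⟩
    exact (Polynomial.isUnit_C.mpr (isUnit_iff_ne_zero.mpr hsne)).dvd_mul_left.mp h2
  have key : ∀ r : R[X], r ≠ 0 → d ∣ r.map (algebraMap R K) → q0 ∣ r := by
    intro r hr hdr
    have hcr : algebraMap R K r.content ≠ 0 := by
      intro h0
      exact hr (content_eq_zero_iff.mp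
        ((injective_iff_map_eq_zero _).mp (IsFractionRing.injective R K) _ h0))
    have h3 : q0.map (algebraMap R K) ∣ r.map (algebraMap R K) := hq0d.trans hdr
    have h4 : q0.map (algebraMap R K) ∣ (r.primPart).map (algebraMap R K) := by
      have hsplit : r.map (algebraMap R K)
          = Polynomial.C (algebraMap R K r.content) * (r.primPart).map (algebraMap R K) := by
        rw [← Polynomial.map_C, ← Polynomial.map_mul, ← r.eq_C_content_mul_primPart]
      rw [hsplit] at h3
      exact (Polynomial.isUnit_C.mpr (isUnit_iff_ne_zero.mpr hcr)).dvd_mul_left.mp h3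
    exact (N.isPrimitive_primPart.dvd_of_fraction_map_dvd_fraction_map
      h4).trans r.primPart_dvd
  have hq0p : q0 ∣ p := key p hp hdp
  have hq0q : q0 ∣ q := by
    by_cases hq : q = 0
    · simp [hq]
    · exact key q hq hdq
  exact Polynomial.isUnit_or_eq_zero_of_isUnit_integerNormalization_primPart hd0 (h hq0p hq0q)

/-- Clearing denominators of a Bézout identity over the fraction field. -/
theorem auxB_clear_denominators {R K : Type*} [CommRing R] [IsDomain R]
    [Field K] [Algebra R K] [IsFractionRing R K]
    {p q : R[X]} (hco : IsCoprime (p.map (algebraMap R K)) (q.map (algebraMap R K))) :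
    ∃ (u v : R[X]) (c : R), c ≠ 0 ∧ u * p + v * q = Polynomial.C c := by
  obtain ⟨a, b, hab⟩ := hco
  obtain ⟨sa, ha⟩ := IsLocalization.integerNormalization_map_to_map R⁰ a
  obtain ⟨sb, hb⟩ := IsLocalization.integerNormalization_map_to_map R⁰ b
  set Na := IsLocalization.integerNormalization R⁰ a
  set Nb := IsLocalization.integerNormalization R⁰ b
  refine ⟨Polynomial.C (sb : R) * Na, Polynomial.C (sa : R) * Nb, (sa : R) * (sb : R),
    mul_ne_zero (nonZeroDivisors.coe_ne_zero sa) (nonZeroDivisors.coe_ne_zero sb), ?_⟩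
  apply Polynomial.map_injective (algebraMap R K) (IsFractionRing.injective R K)
  have hsmul : ∀ (s : R) (x : K[X]), s • x = Polynomial.C (algebraMap R K s) * x := by
    intro s x
    rw [Algebra.smul_def, Polynomial.algebraMap_apply]
  calc ((Polynomial.C (sb:R) * Na) * p + (Polynomial.C (sa:R) * Nb) * q).map (algebraMap R K)
      = Polynomial.C (algebraMap R K (sb:R)) * (Na.map (algebraMap R K)) * p.map (algebraMap R K)
        + Polynomial.C (algebraMap R K (sa:R)) * (Nb.map (algebraMap R K))
          * q.map (algebraMap R K) := by
        simp [Polynomial.map_mul, Polynomial.map_add]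
    _ = Polynomial.C (algebraMap R K ((sa:R) * (sb:R)))
        * (a * p.map (algebraMap R K) + b * q.map (algebraMap R K)) := by
        rw [ha, hb, hsmul, hsmul]
        push_cast
        ring_nf
        rw [map_mul]
        ring
    _ = (Polynomial.C ((sa:R) * (sb:R))).map (algebraMap R K) := by
        rw [hab, mul_one, Polynomial.map_C]

end Aux

/-- A nonzero polynomial in one variable has finitely many zeros. -/
theorem auxC_finite_zeros {d : MvPolynomial (Fin 1) ℂ} (hd : d ≠ 0) :
    {y : ℂ | eval ![y] d = 0}.Finite := by
  have hinj : Function.Injective (eval (fun _ : Fin 0 => (0:ℂ))) := by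
    intro x y hxy
    obtain ⟨x, rfl⟩ := MvPolynomial.C_surjective (Fin 0) x
    obtain ⟨y, rfl⟩ := MvPolynomial.C_surjective (Fin 0) y
    simpa using hxy
  set r : Polynomial ℂ := (finSuccEquiv ℂ 0 d).map (eval (fun _ : Fin 0 => (0:ℂ))) with hr
  have hr0 : r ≠ 0 := by
    intro h0
    apply hd
    have h1 : (finSuccEquiv ℂ 0 d).map (eval (fun _ : Fin 0 => (0:ℂ)))
        = (0 : Polynomial (MvPolynomial (Fin 0) ℂ)).map (eval (fun _ : Fin 0 => (0:ℂ))) := by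
      rw [Polynomial.map_zero]; exact h0
    have h2 := Polynomial.map_injective _ hinj h1
    exact (finSuccEquiv ℂ 0).injective (h2.trans (map_zero _).symm)
  apply (Polynomial.finite_setOf_isRoot hr0).subset
  intro y hy
  have hev : eval (Fin.cons y (fun _ : Fin 0 => (0:ℂ))) d = Polynomial.eval y r :=
    eval_eq_eval_mv_eval' _ y d
  have hcons : (Fin.cons y (fun _ : Fin 0 => (0:ℂ)) : Fin 1 → ℂ) = ![y] := by
    funext i
    fin_cases i
    rfl
  simp only [Set.mem_setOf_eq] at hy
  simp only [Set.mem_setOf_eq, Polynomial.IsRoot, ← hev, hcons, hy]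

/-- `IsRelPrime` transfers along multiplicative equivalences. -/
theorem auxD_isRelPrime_map {M N : Type*} [Monoid M] [Monoid N] (e : M ≃* N) {x y : M}
    (h : IsRelPrime x y) : IsRelPrime (e x) (e y) := by
  intro d h1 h2
  have h1' : e.symm d ∣ x := by simpa using map_dvd e.symm h1
  have h2' : e.symm d ∣ y := by simpa using map_dvd e.symm h2
  simpa using (h h1' h2').map e

/-- The second-coordinate projection of the common zero set of two relatively prime
bivariate polynomials is finite. -/
theorem auxE_proj_finite {F G : MvPolynomial (Fin 2) ℂ} (hF : F ≠ 0) (h : IsRelPrime F G) :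
    {y : ℂ | ∃ x : ℂ, eval ![x, y] F = 0 ∧ eval ![x, y] G = 0}.Finite := by
  classical
  letI : NormalizationMonoid (MvPolynomial (Fin 1) ℂ) :=
    UniqueFactorizationMonoid.normalizationMonoid.toNormalizationMonoid
  letI : NormalizedGCDMonoid (MvPolynomial (Fin 1) ℂ) :=
    UniqueFactorizationMonoid.toNormalizedGCDMonoid (MvPolynomial (Fin 1) ℂ)
  set p := finSuccEquiv ℂ 1 F with hpdef
  set q := finSuccEquiv ℂ 1 G with hqdef
  have hp0 : p ≠ 0 := fun h0 => hF ((finSuccEquiv ℂ 1).injective (h0.trans (map_zero _).symm))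
  have hrel : IsRelPrime p q :=
    auxD_isRelPrime_map (finSuccEquiv ℂ 1).toRingEquiv.toMulEquiv h
  have hco := auxA_isCoprime_map (K := FractionRing (MvPolynomial (Fin 1) ℂ)) hp0 hrel
  obtain ⟨u, v, c, hc0, heq⟩ := auxB_clear_denominators hco
  apply (auxC_finite_zeros hc0).subset
  rintro y ⟨x, hFx, hGx⟩
  have hcons : (Fin.cons x ![y] : Fin 2 → ℂ) = ![x, y] := by
    funext i
    fin_cases i <;> rfl
  have hevF : Polynomial.eval x (p.map (eval ![y])) = 0 := by
    rw [hpdef, ← eval_eq_eval_mv_eval', hcons]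
    exact hFx
  have hevG : Polynomial.eval x (q.map (eval ![y])) = 0 := by
    rw [hqdef, ← eval_eq_eval_mv_eval', hcons]
    exact hGx
  have hφ := congrArg
    (fun r : Polynomial (MvPolynomial (Fin 1) ℂ) => Polynomial.eval x (r.map (eval ![y]))) heq
  simp only [Polynomial.map_add, Polynomial.map_mul, Polynomial.eval_add, Polynomial.eval_mul,
    Polynomial.map_C, Polynomial.eval_C, hevF, hevG, mul_zero, zero_add, add_zero] at hφ
  exact hφ.symm

/-- Lemma 4: if `P = (f, g) : ℂ² → ℂ²` has Jacobian determinant identically `1`, then every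
fiber `P⁻¹(a, b)` is finite. -/
theorem fiber_finite_of_jacobian_eq_one
    (f g : MvPolynomial (Fin 2) ℂ)
    (hJ : pderiv 0 f * pderiv 1 g - pderiv 1 f * pderiv 0 g = 1)
    (a b : ℂ) :
    {p : ℂ × ℂ | eval ![p.1, p.2] f = a ∧ eval ![p.1, p.2] g = b}.Finite := by
  classical
  set F := f - C a with hFdef
  set G := g - C b with hGdef
  have hJ' : pderiv 0 F * pderiv 1 G - pderiv 1 F * pderiv 0 G = 1 := by
    simp only [hFdef, hGdef, map_sub, pderiv_C, sub_zero]
    exact hJ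
  have hF0 : F ≠ 0 := by
    intro h0
    rw [h0] at hJ'
    simp at hJ'
  have hrel : IsRelPrime F G := by
    intro d hdF hdG
    obtain ⟨u, hu⟩ := hdF
    obtain ⟨v, hv⟩ := hdG
    apply isUnit_of_dvd_one
    refine ⟨pderiv 0 d * u * pderiv 1 v + pderiv 0 u * pderiv 1 d * v
      + d * pderiv 0 u * pderiv 1 v - pderiv 1 d * u * pderiv 0 v
      - pderiv 1 u * pderiv 0 d * v - d * pderiv 1 u * pderiv 0 v, ?_⟩
    rw [← hJ', hu, hv]
    simp only [pderiv_mul]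
    ring
  -- swapped versions for the first coordinate
  set e : MvPolynomial (Fin 2) ℂ ≃ₐ[ℂ] MvPolynomial (Fin 2) ℂ :=
    renameEquiv ℂ (Equiv.swap (0 : Fin 2) 1) with hedef
  have hF'0 : e F ≠ 0 := fun h0 => hF0 (e.injective (h0.trans (map_zero _).symm))
  have hrel' : IsRelPrime (e F) (e G) :=
    auxD_isRelPrime_map e.toRingEquiv.toMulEquiv hrel
  have hswap : ∀ (x y : ℂ) (H : MvPolynomial (Fin 2) ℂ),
      eval ![x, y] (e H) = eval ![y, x] H := by
    intro x y H
    rw [hedef, renameEquiv_apply, eval_rename]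
    have hfun : (![x, y] ∘ ⇑(Equiv.swap (0 : Fin 2) 1)) = ![y, x] := by
      funext i
      fin_cases i <;> simp
    rw [hfun]
  have hx := auxE_proj_finite hF'0 hrel'
  have hy := auxE_proj_finite hF0 hrel
  apply Set.Finite.subset (hx.prod hy)
  rintro ⟨x, y⟩ ⟨h1, h2⟩
  simp only [Set.mem_setOf_eq] at h1 h2
  have hFxy : eval ![x, y] F = 0 := by
    rw [hFdef, map_sub, h1, eval_C, sub_self]
  have hGxy : eval ![x, y] G = 0 := by
    rw [hGdef, map_sub, h2, eval_C, sub_self]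
  constructor
  · exact ⟨y, by rw [hswap]; exact hFxy, by rw [hswap]; exact hGxy⟩
  · exact ⟨x, hFxy, hGxy⟩
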